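/- Let p = ⟨p₁ ¬q₁ … ¬q_{m-1} p_m⟩ be a negative sequential pattern all of whose negative itemsets q_i have at most one element. Then, for either non-inclusion relation (partial or total), a tuple e is a soft embedding of p in a sequence s if and only if e is a strict embedding of p in s. -/

import Mathlib

namespace NSPpaper

/-- A sequence is a finite list of itemsets (finite sets of items). -/
abbrev Seq (ι : Type*) := List (Finset ι)

/-- `P` is partially non-included in `I`: `P` is empty or some element of `P` is not in `I`. -/
def PartialNonIncl {ι : Type*} (P I : Finset ι) : Prop := P = ∅ ∨ ∃ e ∈ P, e ∉ I

/-- `P` is totally non-included in `I`: no element of `P` is in `I`. -/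
def TotalNonIncl {ι : Type*} (P I : Finset ι) : Prop := ∀ e ∈ P, e ∉ I

/-- A negative sequential pattern `⟨p₁ ¬q₁ p₂ ¬q₂ … ¬q_{m-1} p_m⟩`:
nonempty positive itemsets `pos = [p₁, …, p_m]` and negative itemsets
`neg = [q₁, …, q_{m-1}]` (possibly empty itemsets). -/
structure NSP (ι : Type*) where
  pos : List (Finset ι)
  neg : List (Finset ι)
  pos_ne : pos ≠ []
  pos_nonempty : ∀ P ∈ pos, P.Nonempty
  len : neg.length + 1 = pos.length

variable {ι : Type*}

/-- `e` is an embedding of the positive part `p⁺` of `p` in `s`: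
strictly increasing positions with `p_i ⊆ s_{e_i}`. -/
def IsPosEmbedding (p : NSP ι) (s : Seq ι) (e : Fin p.pos.length → Fin s.length) : Prop :=
  StrictMono e ∧ ∀ i, p.pos.get i ⊆ s.get (e i)

/-- Soft embedding w.r.t. the non-inclusion relation `ni`:
an embedding of `p⁺` such that `q_i ⋫ s_j` for every `j` with `e_i < j < e_{i+1}`. -/
def IsSoftEmbedding (ni : Finset ι → Finset ι → Prop) (p : NSP ι) (s : Seq ι)
    (e : Fin p.pos.length → Fin s.length) : Prop :=
  IsPosEmbedding p s e ∧
  ∀ i : Fin p.neg.length, ∀ j : Fin s.length,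
    (e ⟨i.1, by have h1 := p.len; have h2 := i.2; omega⟩).1 < j.1 →
    j.1 < (e ⟨i.1 + 1, by have h1 := p.len; have h2 := i.2; omega⟩).1 →
    ni (p.neg.get i) (s.get j)

/-- Union `⋃_{a < j < b} s_j` of the itemsets of `s` strictly between positions `a` and `b`. -/
def segUnion [DecidableEq ι] (s : Seq ι) (a b : ℕ) : Finset ι :=
  (Finset.Ioo a b).biUnion (fun j => s.getD j ∅)

/-- Strict embedding w.r.t. the non-inclusion relation `ni`:
an embedding of `p⁺` such that `q_i ⋫ ⋃_{e_i < j < e_{i+1}} s_j`. -/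
def IsStrictEmbedding [DecidableEq ι] (ni : Finset ι → Finset ι → Prop) (p : NSP ι) (s : Seq ι)
    (e : Fin p.pos.length → Fin s.length) : Prop :=
  IsPosEmbedding p s e ∧
  ∀ i : Fin p.neg.length,
    ni (p.neg.get i)
      (segUnion s (e ⟨i.1, by have h1 := p.len; have h2 := i.2; omega⟩).1
                  (e ⟨i.1 + 1, by have h1 := p.len; have h2 := i.2; omega⟩).1)

/-- Embedding type: soft or strict. -/
inductive EmbT | soft | strict

/-- `τ`-embedding (soft or strict) w.r.t. non-inclusion `ni`. -/
def IsEmb [DecidableEq ι] (τ : EmbT) (ni : Finset ι → Finset ι → Prop) (p : NSP ι) (s : Seq ι)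
    (e : Fin p.pos.length → Fin s.length) : Prop :=
  match τ with
  | .soft => IsSoftEmbedding ni p s e
  | .strict => IsStrictEmbedding ni p s e

/-- `p` weakly occurs in `s` under `(τ, ni)`: some `τ`-embedding of `p` in `s` exists. -/
def WeakOcc [DecidableEq ι] (τ : EmbT) (ni : Finset ι → Finset ι → Prop)
    (p : NSP ι) (s : Seq ι) : Prop :=
  ∃ e, IsEmb τ ni p s e

/-- `p` strongly occurs in `s` under `(τ, ni)`: some embedding of `p⁺` in `s` exists and
every embedding of `p⁺` in `s` is a `τ`-embedding of `p`. -/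
def StrongOcc [DecidableEq ι] (τ : EmbT) (ni : Finset ι → Finset ι → Prop)
    (p : NSP ι) (s : Seq ι) : Prop :=
  (∃ e, IsPosEmbedding p s e) ∧ ∀ e, IsPosEmbedding p s e → IsEmb τ ni p s e

/-- Occurrence mode: weak or strong. -/
inductive OccMode | weak | strong

/-- `p` occurs in `s` under mode `μ`, embedding type `τ` and non-inclusion `ni`. -/
def Occurs [DecidableEq ι] (μ : OccMode) (τ : EmbT) (ni : Finset ι → Finset ι → Prop)
    (p : NSP ι) (s : Seq ι) : Prop :=
  match μ with
  | .weak => WeakOcc τ ni p s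
  | .strong => StrongOcc τ ni p s

/-- Dominance: `θ ⩾ θ'` iff `p θ s` implies `p θ' s` for every NSP `p` and sequence `s`. -/
def Dominates (θ θ' : NSP ι → Seq ι → Prop) : Prop :=
  ∀ (p : NSP ι) (s : Seq ι), θ p s → θ' p s

/-- The set Θ of the eight containment relations. -/
def Theta (ι : Type*) [DecidableEq ι] : Set (NSP ι → Seq ι → Prop) :=
  { θ | ∃ (μ : OccMode) (τ : EmbT) (ni : Finset ι → Finset ι → Prop),
      (ni = PartialNonIncl ∨ ni = TotalNonIncl) ∧ θ = Occurs μ τ ni }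

/-- `p ⊑ p'`. -/
def NspIncl [DecidableEq ι] (p p' : NSP ι) : Prop :=
  p.pos.length ≤ p'.pos.length ∧
  ∃ u : Fin p.pos.length → Fin p'.pos.length, StrictMono u ∧
    (∀ i, p.pos.get i ⊆ p'.pos.get (u i)) ∧
    (∀ i : Fin p.neg.length,
      p.neg.get i ⊆
        (Finset.Ico (u ⟨i.1, by have h1 := p.len; have h2 := i.2; omega⟩).1
                    (u ⟨i.1 + 1, by have h1 := p.len; have h2 := i.2; omega⟩).1).biUnion
          (fun j => p'.neg.getD j ∅)) ∧
    (p.pos.length = p'.pos.length →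
      (∃ j : Fin p.pos.length, p.pos.get j ≠ p'.pos.getD j.1 ∅) ∨
      (∃ j : Fin p.neg.length, p.neg.get j ≠ p'.neg.getD j.1 ∅))

/-- `p ◁ p'`. -/
def Lhd (p p' : NSP ι) : Prop :=
  p.pos.length ≤ p'.pos.length ∧
  (∀ i : Fin p.pos.length, p.pos.get i ⊆ p'.pos.getD i.1 ∅) ∧
  (∀ i : Fin p.neg.length, p.neg.get i ⊆ p'.neg.getD i.1 ∅) ∧
  (p.pos.length = p'.pos.length →
    p.pos.getD (p.pos.length - 1) ∅ ≠ p'.pos.getD (p.pos.length - 1) ∅ ∨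
    ∃ j : Fin p.neg.length, p.neg.get j ≠ p'.neg.getD j.1 ∅)

/-- `p ⊑⁺ p'`. -/
def NspInclPlus (p p' : NSP ι) : Prop :=
  p.pos.length = p'.pos.length ∧
  (∀ i : Fin p.pos.length, p.pos.get i = p'.pos.getD i.1 ∅) ∧
  (∀ i : Fin p.neg.length, p.neg.get i ⊆ p'.neg.getD i.1 ∅) ∧
  (∃ j : Fin p.neg.length, p.neg.get j ≠ p'.neg.getD j.1 ∅)

/-- Support of `p` in the dataset `D` w.r.t. the containment relation `θ`:
the number of sequences of `D` in which `p` occurs according to `θ`. -/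
noncomputable def supp (θ : NSP ι → Seq ι → Prop) (D : Finset (Seq ι)) (p : NSP ι) : ℕ :=
  letI := Classical.decPred (fun s : Seq ι => θ p s)
  (D.filter fun s => θ p s).card

/-- if all negative itemsets of `p` have at most one element, then
soft and strict embeddings coincide, for either non-inclusion relation. -/
lemma mem_segUnion_iff {ι : Type*} [DecidableEq ι] {s : Seq ι} {a b : ℕ} (hb : b ≤ s.length)
    {x : ι} : x ∈ segUnion s a b ↔ ∃ j : Fin s.length, a < j.1 ∧ j.1 < b ∧ x ∈ s.get j := by
  simp only [segUnion, Finset.mem_biUnion, Finset.mem_Ioo]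
  constructor
  · rintro ⟨j, ⟨hja, hjb⟩, hx⟩
    have hj : j < s.length := lt_of_lt_of_le hjb hb
    refine ⟨⟨j, hj⟩, hja, hjb, ?_⟩
    rwa [List.getD_eq_get _ _ ⟨j, hj⟩] at hx
  · rintro ⟨j, hja, hjb, hx⟩
    refine ⟨j.1, ⟨hja, hjb⟩, ?_⟩
    rwa [List.getD_eq_get _ _ j]

theorem soft_iff_strict_of_singleton_negatives {ι : Type*} [DecidableEq ι]
    (p : NSP ι) (hq : ∀ q ∈ p.neg, q.card ≤ 1)
    (ni : Finset ι → Finset ι → Prop)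
    (hni : ni = PartialNonIncl ∨ ni = TotalNonIncl)
    (s : Seq ι) (e : Fin p.pos.length → Fin s.length) :
    IsSoftEmbedding ni p s e ↔ IsStrictEmbedding ni p s e := by
  constructor
  · rintro ⟨hpe, hsoft⟩
    refine ⟨hpe, fun i => ?_⟩
    have hb : ((e ⟨i.1 + 1, by have h1 := p.len; have h2 := i.2; omega⟩) : Fin s.length).1
        ≤ s.length := le_of_lt (Fin.is_lt _)
    rcases hni with rfl | rfl
    · rcases Finset.eq_empty_or_nonempty (p.neg.get i) with h | h
      · exact Or.inl h
      · have hcard : (p.neg.get i).card = 1 :=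
          le_antisymm (hq _ (List.get_mem _ _)) (Finset.card_pos.mpr h)
        obtain ⟨x, hx⟩ := Finset.card_eq_one.mp hcard
        refine Or.inr ⟨x, by rw [hx]; exact Finset.mem_singleton_self x, fun hmem => ?_⟩
        obtain ⟨j, hja, hjb, hxj⟩ := (mem_segUnion_iff hb).mp hmem
        rcases hsoft i j hja hjb with h0 | ⟨y, hy, hyn⟩
        · rw [hx] at h0; exact Finset.singleton_ne_empty x h0
        · rw [hx, Finset.mem_singleton] at hy
          exact hyn (hy ▸ hxj)
    · intro x hx hmem
      obtain ⟨j, hja, hjb, hxj⟩ := (mem_segUnion_iff hb).mp hmem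
      exact hsoft i j hja hjb x hx hxj
  · rintro ⟨hpe, hstrict⟩
    refine ⟨hpe, fun i j hja hjb => ?_⟩
    have hmem : ∀ x ∈ s.get j, x ∈ segUnion s
        ((e ⟨i.1, by have h1 := p.len; have h2 := i.2; omega⟩) : Fin s.length).1
        ((e ⟨i.1 + 1, by have h1 := p.len; have h2 := i.2; omega⟩) : Fin s.length).1 := by
      intro x hx
      exact (mem_segUnion_iff (le_of_lt (Fin.is_lt _))).mpr ⟨j, hja, hjb, hx⟩
    rcases hni with rfl | rfl
    · rcases hstrict i with h0 | ⟨y, hy, hyn⟩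
      · exact Or.inl h0
      · exact Or.inr ⟨y, hy, fun hyj => hyn (hmem y hyj)⟩
    · intro x hx hxj
      exact hstrict i x hx (hmem x hxj)

end NSPpaper
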